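/- Let x : ℝ → ℝ^d be a C² NT-periodic solution of M·ẍ + C·ẋ + K·x = −∇U(x) + f(t) with M, C, K symmetric, C positive definite with y·Cy ≥ C_min|y|², and f continuously differentiable and NT-periodic. Then C_min·‖ẋ‖²_{L²(0,NT)} ≤ ‖ḟ‖_{L^{r*}(0,NT)}·‖x‖_{L^r(0,NT)} for any r > 1 with r* = r/(r−1). -/

import Mathlib

open MeasureTheory intervalIntegral

noncomputable def mv {d : ℕ} (M : Matrix (Fin d) (Fin d) ℝ)
    (v : EuclideanSpace ℝ (Fin d)) : EuclideanSpace ℝ (Fin d) :=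
  WithLp.toLp 2 (M.mulVec v)

lemma inner_mv_symm {d : ℕ} {M : Matrix (Fin d) (Fin d) ℝ} (hM : M.IsSymm)
    (a b : EuclideanSpace ℝ (Fin d)) : (inner ℝ (mv M a) b : ℝ) = inner ℝ a (mv M b) := by
  simp only [mv, PiLp.inner_apply, RCLike.inner_apply, conj_trivial, Matrix.mulVec,
    dotProduct]
  simp only [Finset.sum_mul, Finset.mul_sum]
  rw [Finset.sum_comm]
  refine Finset.sum_congr rfl fun i _ => Finset.sum_congr rfl fun j _ => ?_
  rw [hM.apply j i]
  ring

lemma hasDerivAt_mv {d : ℕ} (M : Matrix (Fin d) (Fin d) ℝ)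
    {u : ℝ → EuclideanSpace ℝ (Fin d)} {u' : EuclideanSpace ℝ (Fin d)} {t : ℝ}
    (hu : HasDerivAt u u' t) : HasDerivAt (fun s => mv M (u s)) (mv M u') t := by
  have hL := (LinearMap.toContinuousLinearMap (Matrix.toEuclideanLin M)).hasFDerivAt (x := u t)
  exact hL.comp_hasDerivAt t hu

lemma continuous_mv {d : ℕ} (M : Matrix (Fin d) (Fin d) ℝ) :
    Continuous (fun v : EuclideanSpace ℝ (Fin d) => mv M v) :=
  (LinearMap.toContinuousLinearMap (Matrix.toEuclideanLin M)).continuous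

lemma hasDerivAt_Ucomp {d : ℕ} {U : EuclideanSpace ℝ (Fin d) → ℝ} (hU : ContDiff ℝ 1 U)
    {x : ℝ → EuclideanSpace ℝ (Fin d)} {t : ℝ} (hx : HasDerivAt x (deriv x t) t) :
    HasDerivAt (fun s => U (x s)) ((inner ℝ (gradient U (x t)) (deriv x t) : ℝ)) t := by
  have hUd : DifferentiableAt ℝ U (x t) := (hU.differentiable one_ne_zero) (x t)
  have h1 : HasFDerivAt U (InnerProductSpace.toDual ℝ _ (gradient U (x t))) (x t) :=
    hUd.hasGradientAt
  have h2 := h1.comp_hasDerivAt t hx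
  simp at h2 ⊢
  exact h2

theorem stmt_15 {d : ℕ} (N : ℕ) (T : ℝ) (hN : 1 ≤ N) (hT : 0 < T)
    (M C K : Matrix (Fin d) (Fin d) ℝ) (hMs : M.IsSymm) (hCs : C.IsSymm) (hKs : K.IsSymm)
    (Cmin : ℝ) (hCmin : 0 < Cmin)
    (hC : ∀ y : EuclideanSpace ℝ (Fin d), Cmin * ‖y‖ ^ 2 ≤ (inner ℝ y (mv C y) : ℝ))
    (U : EuclideanSpace ℝ (Fin d) → ℝ) (hU : ContDiff ℝ 1 U)
    (f : ℝ → EuclideanSpace ℝ (Fin d)) (hf : ContDiff ℝ 1 f)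
    (hfper : Function.Periodic f (N * T))
    (x : ℝ → EuclideanSpace ℝ (Fin d)) (hx : ContDiff ℝ 2 x)
    (hxper : Function.Periodic x (N * T))
    (hode : ∀ t : ℝ, mv M (deriv (deriv x) t) + mv C (deriv x t) + mv K (x t)
      = -gradient U (x t) + f t)
    (r rstar : ℝ) (hr : 1 < r) (hrstar : rstar = r / (r - 1)) :
    Cmin * ∫ t in (0:ℝ)..(N * T), ‖deriv x t‖ ^ 2
      ≤ (∫ t in (0:ℝ)..(N * T), ‖deriv f t‖ ^ rstar) ^ (1 / rstar)
        * (∫ t in (0:ℝ)..(N * T), ‖x t‖ ^ r) ^ (1 / r) := by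
  set c : ℝ := (N : ℝ) * T with hcdef
  have hc : (0:ℝ) ≤ c := by positivity
  -- smoothness facts
  have hdx : Differentiable ℝ x := hx.differentiable (by norm_num)
  have hx1 : ContDiff ℝ 1 (deriv x) :=
    (contDiff_succ_iff_deriv.mp (show ContDiff ℝ (1 + 1) x from by rwa [one_add_one_eq_two])).2.2
  have hdx' : Differentiable ℝ (deriv x) := hx1.differentiable one_ne_zero
  have contx : Continuous x := hx.continuous
  have contx' : Continuous (deriv x) := hx1.continuous
  have contf : Continuous f := hf.continuous
  have contf' : Continuous (deriv f) := hf.continuous_deriv le_rfl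
  have hdf : Differentiable ℝ f := hf.differentiable one_ne_zero
  -- deriv x is periodic
  have hx'per : ∀ t : ℝ, deriv x (t + c) = deriv x t := by
    intro t
    have h1 : (fun s => x (s + c)) = x := funext fun s => hxper s
    calc deriv x (t + c) = deriv (fun s => x (s + c)) t := (deriv_comp_add_const x c t).symm
      _ = deriv x t := by rw [h1]
  -- energy function and its derivative
  have hΦ : ∀ t : ℝ, HasDerivAt (fun s => (1/2) * (inner ℝ (mv M (deriv x s)) (deriv x s) : ℝ)
      + (1/2) * (inner ℝ (mv K (x s)) (x s) : ℝ) + U (x s) - (inner ℝ (f s) (x s) : ℝ))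
      (-(inner ℝ (deriv x t) (mv C (deriv x t)) : ℝ) - (inner ℝ (deriv f t) (x t) : ℝ)) t := by
    intro t
    have hxt : HasDerivAt x (deriv x t) t := (hdx t).hasDerivAt
    have hxt' : HasDerivAt (deriv x) (deriv (deriv x) t) t := (hdx' t).hasDerivAt
    have hft : HasDerivAt f (deriv f t) t := (hdf t).hasDerivAt
    have h1 := (HasDerivAt.inner ℝ (hasDerivAt_mv M hxt') hxt').const_mul (1/2 : ℝ)
    have h2 := (HasDerivAt.inner ℝ (hasDerivAt_mv K hxt) hxt).const_mul (1/2 : ℝ)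
    have h3 := hasDerivAt_Ucomp hU hxt
    have h4 := HasDerivAt.inner ℝ hft hxt
    have h5 := ((h1.add h2).add h3).sub h4
    refine h5.congr_deriv ?_
    have h6 : (inner ℝ (deriv x t) (mv M (deriv (deriv x) t)) : ℝ)
        + inner ℝ (deriv x t) (mv C (deriv x t)) + inner ℝ (deriv x t) (mv K (x t))
        = -(inner ℝ (deriv x t) (gradient U (x t)) : ℝ) + inner ℝ (deriv x t) (f t) := by
      have h7 := congrArg (fun v => (inner ℝ (deriv x t) v : ℝ)) (hode t)
      simpa [inner_add_right, inner_neg_right] using h7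
    have e1 : (inner ℝ (mv M (deriv x t)) (deriv (deriv x) t) : ℝ)
        = inner ℝ (deriv x t) (mv M (deriv (deriv x) t)) := inner_mv_symm hMs _ _
    have e2 : (inner ℝ (mv M (deriv (deriv x) t)) (deriv x t) : ℝ)
        = inner ℝ (deriv x t) (mv M (deriv (deriv x) t)) := real_inner_comm _ _
    have e3 : (inner ℝ (mv K (x t)) (deriv x t) : ℝ)
        = inner ℝ (deriv x t) (mv K (x t)) := real_inner_comm _ _
    have e4 : (inner ℝ (mv K (deriv x t)) (x t) : ℝ)
        = inner ℝ (deriv x t) (mv K (x t)) := inner_mv_symm hKs _ _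
    have e5 : (inner ℝ (gradient U (x t)) (deriv x t) : ℝ)
        = inner ℝ (deriv x t) (gradient U (x t)) := real_inner_comm _ _
    have e6 : (inner ℝ (f t) (deriv x t) : ℝ) = inner ℝ (deriv x t) (f t) := real_inner_comm _ _
    rw [e1, e2, e3, e4, e5, e6]
    linarith [h6]
  -- continuity of the derivative
  have hmvc : Continuous (fun t => mv C (deriv x t)) := (continuous_mv C).comp contx'
  have contA : Continuous (fun t => (inner ℝ (deriv x t) (mv C (deriv x t)) : ℝ)) :=
    contx'.inner hmvc
  have contB : Continuous (fun t => (inner ℝ (deriv f t) (x t) : ℝ)) := contf'.inner contx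
  have iA : IntervalIntegrable (fun t => (inner ℝ (deriv x t) (mv C (deriv x t)) : ℝ))
      volume 0 c := contA.intervalIntegrable _ _
  have iB : IntervalIntegrable (fun t => (inner ℝ (deriv f t) (x t) : ℝ)) volume 0 c :=
    contB.intervalIntegrable _ _
  -- integrate the derivative over a period
  have hint0 : (∫ t in (0:ℝ)..c, (-(inner ℝ (deriv x t) (mv C (deriv x t)) : ℝ)
      - (inner ℝ (deriv f t) (x t) : ℝ))) = 0 := by
    rw [integral_eq_sub_of_hasDerivAt (fun t _ => hΦ t)
      ((contA.neg.sub contB).intervalIntegrable _ _)]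
    have p1 : x c = x 0 := by simpa using hxper 0
    have p2 : deriv x c = deriv x 0 := by simpa using hx'per 0
    have p3 : f c = f 0 := by simpa using hfper 0
    rw [p1, p2, p3]
    ring
  have hintC : (∫ t in (0:ℝ)..c, (inner ℝ (deriv x t) (mv C (deriv x t)) : ℝ))
      = ∫ t in (0:ℝ)..c, -(inner ℝ (deriv f t) (x t) : ℝ) := by
    have h2 : (∫ t in (0:ℝ)..c, -((inner ℝ (deriv x t) (mv C (deriv x t)) : ℝ)
        + (inner ℝ (deriv f t) (x t) : ℝ))) = 0 := by
      simpa only [neg_add, sub_eq_add_neg] using hint0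
    rw [intervalIntegral.integral_neg, neg_eq_zero, intervalIntegral.integral_add iA iB] at h2
    rw [intervalIntegral.integral_neg]
    linarith [h2]
  -- step 1 : coercivity
  have step1 : Cmin * ∫ t in (0:ℝ)..c, ‖deriv x t‖ ^ 2
      ≤ ∫ t in (0:ℝ)..c, (inner ℝ (deriv x t) (mv C (deriv x t)) : ℝ) := by
    rw [← intervalIntegral.integral_const_mul]
    exact intervalIntegral.integral_mono_on hc
      ((continuous_const.mul ((contx'.norm).pow 2)).intervalIntegrable _ _) iA
      (fun t _ => hC _)
  -- step 2 : Cauchy-Schwarz pointwise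
  have step2 : (∫ t in (0:ℝ)..c, -(inner ℝ (deriv f t) (x t) : ℝ))
      ≤ ∫ t in (0:ℝ)..c, ‖deriv f t‖ * ‖x t‖ := by
    refine intervalIntegral.integral_mono_on hc iB.neg
      (((contf'.norm).mul (contx.norm)).intervalIntegrable _ _) (fun t _ => ?_)
    calc -(inner ℝ (deriv f t) (x t) : ℝ) ≤ |(inner ℝ (deriv f t) (x t) : ℝ)| := neg_le_abs _
      _ ≤ ‖deriv f t‖ * ‖x t‖ := abs_real_inner_le_norm _ _
  -- step 3 : Hölder
  have hconj : rstar.HolderConjugate r :=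
    ((Real.holderConjugate_iff_eq_conjExponent hr).mpr hrstar).symm
  have step3 : (∫ t in (0:ℝ)..c, ‖deriv f t‖ * ‖x t‖)
      ≤ (∫ t in (0:ℝ)..c, ‖deriv f t‖ ^ rstar) ^ (1 / rstar)
        * (∫ t in (0:ℝ)..c, ‖x t‖ ^ r) ^ (1 / r) := by
    rw [intervalIntegral.integral_of_le hc, intervalIntegral.integral_of_le hc,
      intervalIntegral.integral_of_le hc]
    haveI : IsFiniteMeasure (volume.restrict (Set.Ioc (0:ℝ) c)) :=
      ⟨by rw [Measure.restrict_apply_univ]; exact measure_Ioc_lt_top⟩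
    obtain ⟨C₁, hC₁⟩ := (isCompact_Icc (a := (0:ℝ)) (b := c)).exists_bound_of_continuousOn
      (contf'.norm.continuousOn)
    obtain ⟨C₂, hC₂⟩ := (isCompact_Icc (a := (0:ℝ)) (b := c)).exists_bound_of_continuousOn
      (contx.norm.continuousOn)
    have m1 : MemLp (fun t => ‖deriv f t‖) (ENNReal.ofReal rstar)
        (volume.restrict (Set.Ioc (0:ℝ) c)) :=
      MemLp.of_bound contf'.norm.aestronglyMeasurable C₁
        ((ae_restrict_iff' measurableSet_Ioc).mpr (Filter.Eventually.of_forall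
          fun t ht => hC₁ t (Set.Ioc_subset_Icc_self ht)))
    have m2 : MemLp (fun t => ‖x t‖) (ENNReal.ofReal r)
        (volume.restrict (Set.Ioc (0:ℝ) c)) :=
      MemLp.of_bound contx.norm.aestronglyMeasurable C₂
        ((ae_restrict_iff' measurableSet_Ioc).mpr (Filter.Eventually.of_forall
          fun t ht => hC₂ t (Set.Ioc_subset_Icc_self ht)))
    exact integral_mul_le_Lp_mul_Lq_of_nonneg hconj
      (Filter.Eventually.of_forall fun t => norm_nonneg _)
      (Filter.Eventually.of_forall fun t => norm_nonneg _) m1 m2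
  calc Cmin * ∫ t in (0:ℝ)..c, ‖deriv x t‖ ^ 2
      ≤ ∫ t in (0:ℝ)..c, (inner ℝ (deriv x t) (mv C (deriv x t)) : ℝ) := step1
    _ = ∫ t in (0:ℝ)..c, -(inner ℝ (deriv f t) (x t) : ℝ) := hintC
    _ ≤ ∫ t in (0:ℝ)..c, ‖deriv f t‖ * ‖x t‖ := step2
    _ ≤ _ := step3
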